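/- For any c ∈ [0, 2a], there exist random variables U₁, U₂, each uniformly distributed on [−a, a], such that U₁ + U₂ is uniformly distributed on [−c, c]. In particular (c = 0) there exist two dependent uniforms on [−a,a] whose sum is identically 0 (complete mixability of two uniforms). -/

import Mathlib

open MeasureTheory

/-- The uniform probability measure on `[-a, a]`. -/
noncomputable def unif (a : ℝ) : Measure ℝ :=
  (ENNReal.ofReal (2 * a))⁻¹ • volume.restrict (Set.Icc (-a) a)

open Set

set_option linter.unusedSectionVars false

noncomputable def h1 (a c d : ℝ) : ℝ := if 2*a - c ≤ d then (d^2)⁻¹ else 0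
noncomputable def h2 (a c s : ℝ) : ℝ := if 0 ≤ s ∧ s ≤ c then ((2*a - s)^2)⁻¹ else 0

lemma measurable_h1 (a c : ℝ) : Measurable (h1 a c) :=
  Measurable.ite (measurableSet_le measurable_const measurable_id)
    ((measurable_id.pow_const 2).inv) measurable_const

lemma measurable_h2 (a c : ℝ) : Measurable (h2 a c) := by
  have : Measurable fun s : ℝ => ((2*a - s)^2)⁻¹ :=
    (((measurable_const.sub measurable_id).pow_const 2)).inv
  exact Measurable.ite
    (by
      have : {s : ℝ | 0 ≤ s ∧ s ≤ c} = Set.Icc 0 c := by ext s; simp [Set.mem_Icc]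
      rw [this]; exact measurableSet_Icc) this measurable_const

lemma h1_nonneg (a c d : ℝ) : 0 ≤ h1 a c d := by
  unfold h1; split <;> positivity

lemma h2_nonneg (a c s : ℝ) : 0 ≤ h2 a c s := by
  unfold h2; split <;> positivity

lemma h1_le (a c : ℝ) (hac : 0 < 2*a - c) (d : ℝ) : h1 a c d ≤ ((2*a - c)^2)⁻¹ := by
  unfold h1; split
  · next h => exact inv_anti₀ (by positivity) (by nlinarith)
  · positivity

lemma h2_le (a c : ℝ) (hac : 0 < 2*a - c) (s : ℝ) : h2 a c s ≤ ((2*a - c)^2)⁻¹ := by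
  unfold h2; split
  · next h => exact inv_anti₀ (by positivity) (by nlinarith [h.1, h.2])
  · positivity

lemma integral_inv_sq {p q : ℝ} (hp : 0 < p) (hq : 0 < q) :
    ∫ u in p..q, (u^2)⁻¹ = p⁻¹ - q⁻¹ := by
  have hcont : ContinuousOn (fun u : ℝ => (u^2)⁻¹) (Set.uIcc p q) := by
    apply ContinuousOn.inv₀ ((continuous_pow 2).continuousOn)
    intro u hu
    have : 0 < u := lt_of_lt_of_le (lt_min hp hq) hu.1
    positivity
  have hderiv : ∀ u ∈ Set.uIcc p q, HasDerivAt (fun v : ℝ => -v⁻¹) ((u^2)⁻¹) u := by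
    intro u hu
    have hu0 : u ≠ 0 := by
      have : 0 < u := lt_of_lt_of_le (lt_min hp hq) hu.1
      exact this.ne'
    have hd : HasDerivAt (fun v : ℝ => -v⁻¹) (-(-(u^2)⁻¹)) u := (hasDerivAt_inv hu0).neg
    simpa using hd
  rw [intervalIntegral.integral_eq_sub_of_hasDerivAt hderiv hcont.intervalIntegrable]
  ring

/-- the joint density -/
noncomputable def gd (a c x y : ℝ) : ℝ :=
  if x ∈ Icc (-a) a ∧ y ∈ Icc (-a) a then
    (2*a - c) / (2*c) * (h1 a c (y - x) + h1 a c (x - y) + h2 a c (x + y) + h2 a c (-(x + y)))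
  else 0


lemma unif_univ {a : ℝ} (ha : 0 < a) : unif a Set.univ = 1 := by
  unfold unif
  rw [Measure.smul_apply, Measure.restrict_apply_univ, Real.volume_Icc, smul_eq_mul]
  rw [show a - (-a) = 2*a by ring]
  exact ENNReal.inv_mul_cancel (by simp only [ne_eq, ENNReal.ofReal_eq_zero, not_le]; linarith)
    ENNReal.ofReal_ne_top

lemma isProb_unif {a : ℝ} (ha : 0 < a) : IsProbabilityMeasure (unif a) := ⟨unif_univ ha⟩

lemma map_neg_unif {a : ℝ} : (unif a).map (fun x : ℝ => -x) = unif a := by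
  unfold unif
  rw [Measure.map_smul]
  congr 1
  ext E hE
  rw [Measure.map_apply measurable_neg hE, Measure.restrict_apply (hE.preimage measurable_neg),
    Measure.restrict_apply hE]
  have hset : (fun x : ℝ => -x) ⁻¹' E ∩ Set.Icc (-a) a
      = (fun x : ℝ => -x) ⁻¹' (E ∩ Set.Icc (-a) a) := by
    ext x
    simp only [Set.mem_inter_iff, Set.mem_preimage, Set.mem_Icc]
    constructor
    · rintro ⟨h1, h2, h3⟩; exact ⟨h1, by linarith, by linarith⟩
    · rintro ⟨h1, h2, h3⟩; exact ⟨h1, by linarith, by linarith⟩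
  rw [hset]
  exact (Measure.measurePreserving_neg (volume : Measure ℝ)).measure_preimage
    ((hE.inter measurableSet_Icc).nullMeasurableSet)

lemma map_two_unif {a : ℝ} (ha : 0 < a) :
    (unif a).map (fun x : ℝ => x + x) = unif (2*a) := by
  have h2 : (fun x : ℝ => x + x) = (fun x : ℝ => 2*x) := by funext x; ring
  rw [h2]
  unfold unif
  rw [Measure.map_smul]
  have hrestr : (volume.restrict (Set.Icc (-a) a)).map (fun x : ℝ => 2*x)
      = (ENNReal.ofReal 2)⁻¹ • volume.restrict (Set.Icc (-(2*a)) (2*a)) := by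
    ext E hE
    rw [Measure.map_apply (measurable_const_mul 2) hE,
      Measure.restrict_apply (hE.preimage (measurable_const_mul 2)),
      Measure.smul_apply, Measure.restrict_apply hE, smul_eq_mul]
    have hset : (fun x : ℝ => 2*x) ⁻¹' E ∩ Set.Icc (-a) a
        = (fun x : ℝ => 2*x) ⁻¹' (E ∩ Set.Icc (-(2*a)) (2*a)) := by
      ext x
      simp only [Set.mem_inter_iff, Set.mem_preimage, Set.mem_Icc]
      constructor
      · rintro ⟨h1, h2, h3⟩; exact ⟨h1, by linarith, by linarith⟩
      · rintro ⟨h1, h2, h3⟩; exact ⟨h1, by linarith, by linarith⟩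
    rw [hset]
    have hmapvol := Real.map_volume_mul_left (two_ne_zero (α := ℝ))
    have := Measure.map_apply (μ := volume) (measurable_const_mul (2:ℝ))
      (hE.inter (measurableSet_Icc (a := -(2*a)) (b := 2*a)))
    rw [hmapvol] at this
    rw [← this, Measure.smul_apply, smul_eq_mul]
    norm_num
    rw [show (1:ℝ)/2 = (2:ℝ)⁻¹ by norm_num,
      ENNReal.ofReal_inv_of_pos (by norm_num : (0:ℝ) < 2), ENNReal.ofReal_ofNat]
  rw [hrestr, smul_smul]
  congr 1
  rw [← ENNReal.ofReal_inv_of_pos (by norm_num : (0:ℝ) < 2),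
    ← ENNReal.ofReal_inv_of_pos (by linarith : (0:ℝ) < 2*a),
    ← ENNReal.ofReal_inv_of_pos (by linarith : (0:ℝ) < 2*(2*a)),
    ← ENNReal.ofReal_mul (by positivity)]
  congr 1
  field_simp

section T
variable {a c : ℝ} (ha : 0 < a) (hc : 0 < c) (hca : c < 2*a)

include ha hc hca in
lemma T1_eq (x : ℝ) (hx : x ∈ Icc (-a) a) :
    ∫ y in Icc (-a) a, h1 a c (y - x) =
      if x ≤ c - a then (2*a - c)⁻¹ - (a - x)⁻¹ else 0 := by
  obtain ⟨hx1, hx2⟩ := hx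
  have hfun : ∀ y : ℝ, h1 a c (y - x) =
      (Ici (x + (2*a - c))).indicator (fun y => ((y - x)^2)⁻¹) y := by
    intro y
    simp only [h1, Set.indicator_apply, Set.mem_Ici]
    congr 1
    · simp [eq_iff_iff, le_sub_iff_add_le']
  rw [show (fun y => h1 a c (y - x)) = _ from funext hfun]
  rw [setIntegral_indicator measurableSet_Ici]
  have hinter : Icc (-a) a ∩ Ici (x + (2*a - c)) = Icc (x + (2*a - c)) a := by
    ext y
    simp only [Set.mem_inter_iff, Set.mem_Icc, Set.mem_Ici]
    constructor
    · rintro ⟨⟨_, hy2⟩, hy3⟩; exact ⟨hy3, hy2⟩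
    · rintro ⟨hy1, hy2⟩; exact ⟨⟨by linarith, hy2⟩, hy1⟩
  rw [hinter]
  split
  · next hxc =>
    have hle : x + (2*a - c) ≤ a := by linarith
    rw [integral_Icc_eq_integral_Ioc, ← intervalIntegral.integral_of_le hle]
    rw [intervalIntegral.integral_comp_sub_right (fun u => (u^2)⁻¹) x]
    have : x + (2*a - c) - x = 2*a - c := by ring
    rw [this]
    exact integral_inv_sq (by linarith) (by linarith [hxc])
  · next hxc =>
    push_neg at hxc
    rw [Set.Icc_eq_empty (by intro h; linarith)]
    simp

include ha hc hca in
lemma T3_eq (x : ℝ) (hx : x ∈ Icc (-a) a) :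
    ∫ y in Icc (-a) a, h2 a c (x + y) =
      if x ≤ c - a then (a - x)⁻¹ - (2*a)⁻¹ else (2*a - c)⁻¹ - (2*a)⁻¹ := by
  obtain ⟨hx1, hx2⟩ := hx
  have hfun : ∀ y : ℝ, h2 a c (x + y) =
      (Icc (-x) (c - x)).indicator (fun y => ((2*a - (x + y))^2)⁻¹) y := by
    intro y
    simp only [h2, Set.indicator_apply, Set.mem_Icc]
    congr 1
    simp only [eq_iff_iff, neg_le, le_sub_iff_add_le']
    constructor
    · rintro ⟨u, v⟩; exact ⟨by linarith, by linarith⟩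
    · rintro ⟨u, v⟩; exact ⟨by linarith, by linarith⟩
  rw [show (fun y => h2 a c (x + y)) = _ from funext hfun]
  rw [setIntegral_indicator measurableSet_Icc, Set.Icc_inter_Icc]
  have hmax : max (-a) (-x) = -x := max_eq_right (by linarith)
  rw [hmax]
  split
  · next hxc =>
    have hmin : min a (c - x) = a := min_eq_left (by linarith)
    rw [hmin]
    rw [integral_Icc_eq_integral_Ioc, ← intervalIntegral.integral_of_le (by linarith)]
    simp_rw [add_comm x]
    rw [intervalIntegral.integral_comp_add_right (fun t => ((2*a - t)^2)⁻¹) x]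
    rw [intervalIntegral.integral_comp_sub_left (fun u => (u^2)⁻¹) (2*a)]
    have e1 : -x + x = 0 := by ring
    have e2 : 2*a - (a + x) = a - x := by ring
    rw [e1, e2, show 2*a - 0 = 2*a by ring]
    exact integral_inv_sq (by linarith) (by linarith)
  · next hxc =>
    push_neg at hxc
    have hmin : min a (c - x) = c - x := min_eq_right (by linarith)
    rw [hmin]
    rw [integral_Icc_eq_integral_Ioc, ← intervalIntegral.integral_of_le (by linarith)]
    simp_rw [add_comm x]
    rw [intervalIntegral.integral_comp_add_right (fun t => ((2*a - t)^2)⁻¹) x]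
    rw [intervalIntegral.integral_comp_sub_left (fun u => (u^2)⁻¹) (2*a)]
    have e1 : -x + x = 0 := by ring
    have e2 : c - x + x = c := by ring
    rw [e1, e2, show 2*a - 0 = 2*a by ring]
    exact integral_inv_sq (by linarith) (by linarith)
lemma integrableOn_Icc_of_bounded {f : ℝ → ℝ} {l u M : ℝ} (hf : Measurable f)
    (hb : ∀ y, |f y| ≤ M) : IntegrableOn f (Icc l u) volume :=
  Measure.integrableOn_of_bounded measure_Icc_lt_top.ne hf.aestronglyMeasurable (ae_of_all _ hb)

include hca in
lemma integrableOn_h1' (l u : ℝ) (φ : ℝ → ℝ) (hφ : Measurable φ) :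
    IntegrableOn (fun y => h1 a c (φ y)) (Icc l u) volume := by
  refine integrableOn_Icc_of_bounded ((measurable_h1 a c).comp hφ) (M := ((2*a - c)^2)⁻¹) ?_
  intro y
  rw [abs_of_nonneg (h1_nonneg _ _ _)]
  exact h1_le a c (by linarith) _

include hca in
lemma integrableOn_h2' (l u : ℝ) (φ : ℝ → ℝ) (hφ : Measurable φ) :
    IntegrableOn (fun y => h2 a c (φ y)) (Icc l u) volume := by
  refine integrableOn_Icc_of_bounded ((measurable_h2 a c).comp hφ) (M := ((2*a - c)^2)⁻¹) ?_
  intro y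
  rw [abs_of_nonneg (h2_nonneg _ _ _)]
  exact h2_le a c (by linarith) _

lemma flip_integral {b : ℝ} (hb : 0 ≤ b) (f : ℝ → ℝ) :
    ∫ y in Icc (-b) b, f (-y) = ∫ y in Icc (-b) b, f y := by
  rw [integral_Icc_eq_integral_Ioc, ← intervalIntegral.integral_of_le (by linarith),
    integral_Icc_eq_integral_Ioc, ← intervalIntegral.integral_of_le (by linarith : -b ≤ b),
    intervalIntegral.integral_comp_neg f]
  simp

include ha hc hca in
lemma margin_fst (x : ℝ) :
    ∫ y, gd a c x y = Set.indicator (Icc (-a) a) (fun _ => (2*a)⁻¹) x := by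
  by_cases hx : x ∈ Icc (-a) a
  · have expand : (fun y => gd a c x y) = Set.indicator (Icc (-a) a)
        (fun y => (2*a - c) / (2*c) *
          (h1 a c (y - x) + h1 a c (x - y) + h2 a c (x + y) + h2 a c (-(x + y)))) := by
      funext y
      simp only [gd, Set.indicator_apply, hx, true_and]
    rw [expand, integral_indicator measurableSet_Icc, integral_const_mul]
    have i1 : IntegrableOn (fun y => h1 a c (y - x)) (Icc (-a) a) volume :=
      integrableOn_h1' hca _ _ _ (measurable_id.sub measurable_const)
    have i2 : IntegrableOn (fun y => h1 a c (x - y)) (Icc (-a) a) volume :=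
      integrableOn_h1' hca _ _ _ (measurable_const.sub measurable_id)
    have i3 : IntegrableOn (fun y => h2 a c (x + y)) (Icc (-a) a) volume :=
      integrableOn_h2' hca _ _ _ (measurable_const.add measurable_id)
    have i4 : IntegrableOn (fun y => h2 a c (-(x + y))) (Icc (-a) a) volume :=
      integrableOn_h2' hca _ _ _ (measurable_const.add measurable_id).neg
    have i12 : IntegrableOn (fun y => h1 a c (y - x) + h1 a c (x - y)) (Icc (-a) a) volume :=
      i1.add i2
    have i123 : IntegrableOn
        (fun y => h1 a c (y - x) + h1 a c (x - y) + h2 a c (x + y)) (Icc (-a) a) volume :=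
      i12.add i3
    rw [integral_add i123 i4, integral_add i12 i3, integral_add i1 i2]
    have hT2 : ∫ y in Icc (-a) a, h1 a c (x - y) = ∫ y in Icc (-a) a, h1 a c (y - -x) := by
      have := flip_integral ha.le (fun z => h1 a c (x + z))
      simp only [← sub_eq_add_neg] at this
      rw [this]
      congr 1; funext y; congr 1; ring
    have hT4 : ∫ y in Icc (-a) a, h2 a c (-(x + y)) =
        ∫ y in Icc (-a) a, h2 a c (-x + y) := by
      have := flip_integral ha.le (fun z => h2 a c (-x + z))
      rw [← this]
      congr 1; funext y; congr 1; ring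
    have hmx : -x ∈ Icc (-a) a := by
      simp only [Set.mem_Icc] at hx ⊢; constructor <;> linarith [hx.1, hx.2]
    rw [hT2, hT4, T1_eq ha hc hca x hx, T1_eq ha hc hca (-x) hmx,
      T3_eq ha hc hca x hx, T3_eq ha hc hca (-x) hmx,
      Set.indicator_of_mem hx]
    have hne1 : 2*a - c ≠ 0 := by linarith
    have hne2 : (2:ℝ)*a ≠ 0 := by linarith
    have hne3 : c ≠ 0 := by linarith
    rcases le_or_gt x (c - a) with h | h <;> rcases le_or_gt (-x) (c - a) with h' | h'
    · simp only [if_pos h, if_pos h']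
      have hax : a - x ≠ 0 := by simp only [Set.mem_Icc] at hx; intro e; nlinarith [hx.2]
      have hax' : a - -x ≠ 0 := by simp only [Set.mem_Icc] at hx; intro e; nlinarith [hx.1]
      field_simp
      ring
    · simp only [if_pos h, if_neg (not_le.mpr h')]
      have hax : a - x ≠ 0 := by intro e; nlinarith
      field_simp
      ring
    · simp only [if_neg (not_le.mpr h), if_pos h']
      have hax' : a - -x ≠ 0 := by intro e; nlinarith
      field_simp
      ring
    · simp only [if_neg (not_le.mpr h), if_neg (not_le.mpr h')]
      field_simp
      ring
  · have expand : (fun y => gd a c x y) = fun _ => (0:ℝ) := by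
      funext y; simp [gd, hx]
    rw [expand, integral_zero, Set.indicator_of_notMem hx]
lemma neg_integral (f : ℝ → ℝ) : ∫ x, f (-x) = ∫ x, f x :=
  (Measure.measurePreserving_neg (volume : Measure ℝ)).integral_comp
    (MeasurableEquiv.neg ℝ).measurableEmbedding f

lemma gd_point_symm (u v : ℝ) : gd a c (-u) (-v) = gd a c u v := by
  unfold gd
  have hcond : ((-u ∈ Icc (-a) a) ∧ (-v ∈ Icc (-a) a)) ↔ ((u ∈ Icc (-a) a) ∧ (v ∈ Icc (-a) a)) := by
    simp only [Set.mem_Icc]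
    constructor
    · rintro ⟨⟨p1, p2⟩, q1, q2⟩; exact ⟨⟨by linarith, by linarith⟩, by linarith, by linarith⟩
    · rintro ⟨⟨p1, p2⟩, q1, q2⟩; exact ⟨⟨by linarith, by linarith⟩, by linarith, by linarith⟩
  by_cases h : (u ∈ Icc (-a) a) ∧ (v ∈ Icc (-a) a)
  · rw [if_pos (hcond.mpr h), if_pos h]
    have e1 : -v - -u = u - v := by ring
    have e2 : -u - -v = v - u := by ring
    have e3 : -u + -v = -(u + v) := by ring
    have e4 : -(-u + -v) = u + v := by ring
    rw [e1, e2, e3, neg_neg]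
    ring
  · rw [if_neg (fun hh => h (hcond.mp hh)), if_neg h]

include ha hc hca in
lemma margin_sum_pos (s : ℝ) (hs : 0 < s) :
    ∫ t, gd a c t (s - t) = Set.indicator (Icc (-c) c) (fun _ => (2*c)⁻¹) s := by
  have h2ac : 0 < 2*a - c := by linarith
  have expand : (fun t => gd a c t (s - t)) = Set.indicator (Icc (s - a) a)
      (fun t => (2*a - c) / (2*c) *
        (h1 a c (s - 2*t) + h1 a c (2*t - s) + h2 a c s + h2 a c (-s))) := by
    funext t
    have hcond : (t ∈ Icc (-a) a ∧ s - t ∈ Icc (-a) a) ↔ t ∈ Icc (s - a) a := by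
      simp only [Set.mem_Icc]
      constructor
      · rintro ⟨⟨u1, u2⟩, v1, v2⟩; exact ⟨by linarith, u2⟩
      · rintro ⟨w1, w2⟩; exact ⟨⟨by linarith, w2⟩, by linarith, by linarith⟩
    simp only [gd, Set.indicator_apply]
    by_cases h : t ∈ Icc (s - a) a
    · rw [if_pos (hcond.mpr h), if_pos h]
      have e1 : s - t - t = s - 2*t := by ring
      have e2 : t - (s - t) = 2*t - s := by ring
      have e3 : t + (s - t) = s := by ring
      rw [e1, e2, e3]
    · rw [if_neg (fun hh => h (hcond.mp hh)), if_neg h]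
  rw [expand, integral_indicator measurableSet_Icc, integral_const_mul]
  have i1 : IntegrableOn (fun t => h1 a c (s - 2*t)) (Icc (s - a) a) volume :=
    integrableOn_h1' hca _ _ _ (measurable_const.sub (measurable_id.const_mul 2))
  have i2 : IntegrableOn (fun t => h1 a c (2*t - s)) (Icc (s - a) a) volume :=
    integrableOn_h1' hca _ _ _ ((measurable_id.const_mul 2).sub measurable_const)
  have i3 : IntegrableOn (fun _ : ℝ => h2 a c s) (Icc (s - a) a) volume :=
    integrableOn_h2' hca _ _ _ measurable_const
  have i4 : IntegrableOn (fun _ : ℝ => h2 a c (-s)) (Icc (s - a) a) volume :=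
    integrableOn_h2' hca _ _ _ measurable_const
  have i12 : IntegrableOn (fun t => h1 a c (s - 2*t) + h1 a c (2*t - s)) (Icc (s - a) a) volume :=
    i1.add i2
  have i123 : IntegrableOn (fun t => h1 a c (s - 2*t) + h1 a c (2*t - s) + h2 a c s)
      (Icc (s - a) a) volume := i12.add i3
  rw [integral_add i123 i4, integral_add i12 i3, integral_add i1 i2]
  have hD : h2 a c (-s) = 0 := by
    unfold h2; rw [if_neg]; rintro ⟨p, _⟩; linarith
  rcases le_or_gt s c with hsc | hsc
  · -- s ∈ (0, c]
    have hA : ∫ t in Icc (s - a) a, h1 a c (s - 2*t)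
        = (2:ℝ)⁻¹ * ((2*a - c)⁻¹ - (2*a - s)⁻¹) := by
      have hfun : ∀ t : ℝ, h1 a c (s - 2*t) =
          (Iic ((s - (2*a - c))/2)).indicator (fun t => ((s - 2*t)^2)⁻¹) t := by
        intro t
        simp only [h1, Set.indicator_apply, Set.mem_Iic]
        by_cases hcase : t ≤ (s - (2*a - c))/2
        · rw [if_pos hcase, if_pos (by linarith)]
        · rw [if_neg hcase, if_neg (by intro hh; apply hcase; linarith)]
      rw [show (fun t => h1 a c (s - 2*t)) = _ from funext hfun]
      rw [setIntegral_indicator measurableSet_Iic]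
      have hinter : Icc (s - a) a ∩ Iic ((s - (2*a - c))/2) = Icc (s - a) ((s - (2*a - c))/2) := by
        ext t
        simp only [Set.mem_inter_iff, Set.mem_Icc, Set.mem_Iic]
        constructor
        · rintro ⟨⟨p1, _⟩, p3⟩; exact ⟨p1, p3⟩
        · rintro ⟨p1, p2⟩; exact ⟨⟨p1, by linarith⟩, p2⟩
      rw [hinter, integral_Icc_eq_integral_Ioc,
        ← intervalIntegral.integral_of_le (by linarith : s - a ≤ (s - (2*a - c))/2)]
      have harg : ∀ t : ℝ, ((s - 2*t)^2)⁻¹ = (fun u => (u^2)⁻¹) ((-2)*t + s) := by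
        intro t; congr 1; ring
      simp_rw [harg]
      rw [intervalIntegral.integral_comp_mul_add (fun u => (u^2)⁻¹) (by norm_num : (-2:ℝ) ≠ 0) s]
      have b1 : (-2)*(s - a) + s = 2*a - s := by ring
      have b2 : (-2)*((s - (2*a - c))/2) + s = 2*a - c := by ring
      rw [b1, b2, integral_inv_sq (by linarith) h2ac]
      simp only [smul_eq_mul]
      ring
    have hB : ∫ t in Icc (s - a) a, h1 a c (2*t - s)
        = (2:ℝ)⁻¹ * ((2*a - c)⁻¹ - (2*a - s)⁻¹) := by
      have hfun : ∀ t : ℝ, h1 a c (2*t - s) =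
          (Ici ((s + (2*a - c))/2)).indicator (fun t => ((2*t - s)^2)⁻¹) t := by
        intro t
        simp only [h1, Set.indicator_apply, Set.mem_Ici]
        by_cases hcase : (s + (2*a - c))/2 ≤ t
        · rw [if_pos hcase, if_pos (by linarith)]
        · rw [if_neg hcase, if_neg (by intro hh; apply hcase; linarith)]
      rw [show (fun t => h1 a c (2*t - s)) = _ from funext hfun]
      rw [setIntegral_indicator measurableSet_Ici]
      have hinter : Icc (s - a) a ∩ Ici ((s + (2*a - c))/2) = Icc ((s + (2*a - c))/2) a := by
        ext t
        simp only [Set.mem_inter_iff, Set.mem_Icc, Set.mem_Ici]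
        constructor
        · rintro ⟨⟨_, p2⟩, p3⟩; exact ⟨p3, p2⟩
        · rintro ⟨p1, p2⟩; exact ⟨⟨by linarith, p2⟩, p1⟩
      rw [hinter, integral_Icc_eq_integral_Ioc,
        ← intervalIntegral.integral_of_le (by linarith : (s + (2*a - c))/2 ≤ a)]
      have harg : ∀ t : ℝ, ((2*t - s)^2)⁻¹ = (fun u => (u^2)⁻¹) (2*t + (-s)) := by
        intro t; congr 1; try ring
      simp_rw [harg]
      rw [intervalIntegral.integral_comp_mul_add (fun u => (u^2)⁻¹) (by norm_num : (2:ℝ) ≠ 0) (-s)]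
      have b1 : 2*((s + (2*a - c))/2) + (-s) = 2*a - c := by ring
      have b2 : 2*a + (-s) = 2*a - s := by ring
      rw [b1, b2, integral_inv_sq h2ac (by linarith)]
      simp only [smul_eq_mul]
    have hC : ∫ t in Icc (s - a) a, (fun _ : ℝ => h2 a c s) t = (2*a - s)⁻¹ := by
      rw [setIntegral_const]
      have hvol : (volume (Icc (s - a) a)).toReal = 2*a - s := by
        rw [Real.volume_Icc, ENNReal.toReal_ofReal (by linarith)]
        ring
      have hval : h2 a c s = ((2*a - s)^2)⁻¹ := by
        unfold h2; rw [if_pos ⟨hs.le, hsc⟩]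
      rw [Measure.real, hvol, hval, smul_eq_mul]
      have hne : 2*a - s ≠ 0 := by linarith
      field_simp
    have hDint : ∫ t in Icc (s - a) a, (fun _ : ℝ => h2 a c (-s)) t = 0 := by
      simp [hD]
    rw [hA, hB, hC, hDint]
    rw [Set.indicator_of_mem (by constructor <;> [linarith; exact hsc] : s ∈ Icc (-c) c)]
    have hne1 : 2*a - c ≠ 0 := by linarith
    have hne2 : 2*a - s ≠ 0 := by linarith
    have hne3 : c ≠ 0 := by linarith
    field_simp
    ring
  · -- s > c : everything vanishes
    have hA : ∫ t in Icc (s - a) a, h1 a c (s - 2*t) = 0 := by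
      have hfun : ∀ t ∈ Icc (s - a) a, h1 a c (s - 2*t) = 0 := by
        intro t ht
        unfold h1
        rw [if_neg]
        intro hcontra
        have := ht.1
        simp only [Set.mem_Icc] at ht
        linarith [ht.1]
      rw [setIntegral_congr_fun measurableSet_Icc hfun]
      simp
    have hB : ∫ t in Icc (s - a) a, h1 a c (2*t - s) = 0 := by
      have hfun : ∀ t ∈ Icc (s - a) a, h1 a c (2*t - s) = 0 := by
        intro t ht
        unfold h1
        rw [if_neg]
        intro hcontra
        simp only [Set.mem_Icc] at ht
        linarith [ht.2]
      rw [setIntegral_congr_fun measurableSet_Icc hfun]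
      simp
    have hCval : h2 a c s = 0 := by
      unfold h2; rw [if_neg]; rintro ⟨_, p⟩; linarith
    rw [hA, hB]
    simp only [hCval, hD, integral_const, smul_eq_mul, mul_zero]
    rw [Set.indicator_of_notMem (by simp only [Set.mem_Icc]; intro h; linarith [h.2] : s ∉ Icc (-c) c)]
    ring

include ha hc hca in
lemma margin_sum (s : ℝ) (hs : s ≠ 0) :
    ∫ t, gd a c t (s - t) = Set.indicator (Icc (-c) c) (fun _ => (2*c)⁻¹) s := by
  rcases hs.lt_or_gt with hneg | hpos
  · have key := margin_sum_pos ha hc hca (-s) (by linarith)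
    have subst : ∫ t, gd a c t (s - t) = ∫ t, gd a c t (-s - t) := by
      rw [← neg_integral (fun t => gd a c t (-s - t))]
      congr 1; funext t
      have : -s - -t = -(s - t) := by ring
      rw [this, gd_point_symm]
    rw [subst, key]
    simp only [Set.indicator_apply, Set.mem_Icc]
    have : (-c ≤ -s ∧ -s ≤ c) ↔ (-c ≤ s ∧ s ≤ c) := by
      constructor <;> rintro ⟨p, q⟩ <;> exact ⟨by linarith, by linarith⟩
    rw [if_congr this rfl rfl]
  · exact margin_sum_pos ha hc hca s hpos
lemma measurable_gd : Measurable (fun p : ℝ × ℝ => gd a c p.1 p.2) := by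
  unfold gd
  refine Measurable.ite ?_ ?_ measurable_const
  · exact (measurable_fst measurableSet_Icc).inter (measurable_snd measurableSet_Icc)
  · refine Measurable.const_mul ?_ _
    exact ((((measurable_h1 a c).comp (measurable_snd.sub measurable_fst)).add
      ((measurable_h1 a c).comp (measurable_fst.sub measurable_snd))).add
      ((measurable_h2 a c).comp (measurable_fst.add measurable_snd))).add
      ((measurable_h2 a c).comp (measurable_fst.add measurable_snd).neg)

include hc hca in
lemma gd_nonneg (x y : ℝ) : 0 ≤ gd a c x y := by
  unfold gd
  split
  · have := h1_nonneg a c (y - x)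
    have := h1_nonneg a c (x - y)
    have := h2_nonneg a c (x + y)
    have := h2_nonneg a c (-(x + y))
    have hC : 0 ≤ (2*a - c) / (2*c) := by
      apply div_nonneg <;> linarith
    nlinarith
  · exact le_refl 0

include hc hca in
lemma gd_le (x y : ℝ) : gd a c x y ≤ (2*a - c) / (2*c) * (4 * ((2*a - c)^2)⁻¹) := by
  have h2ac : 0 < 2*a - c := by linarith
  have hC : 0 ≤ (2*a - c) / (2*c) := by apply div_nonneg <;> linarith
  have hB : 0 ≤ (2*a - c) / (2*c) * (4 * ((2*a - c)^2)⁻¹) := by positivity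
  unfold gd
  split
  · have b1 := h1_le a c h2ac (y - x)
    have b2 := h1_le a c h2ac (x - y)
    have b3 := h2_le a c h2ac (x + y)
    have b4 := h2_le a c h2ac (-(x + y))
    have : h1 a c (y - x) + h1 a c (x - y) + h2 a c (x + y) + h2 a c (-(x + y))
        ≤ 4 * ((2*a - c)^2)⁻¹ := by linarith
    exact mul_le_mul_of_nonneg_left this hC
  · exact hB

include hc hca in
lemma integrable_gd_slice {f : ℝ → ℝ} (hf : Measurable f)
    (hvanish : ∀ y, y ∉ Icc (-a) a → f y = 0)
    (hbd : ∀ y, |f y| ≤ (2*a - c) / (2*c) * (4 * ((2*a - c)^2)⁻¹)) :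
    Integrable f volume := by
  have : f = (Icc (-a) a).indicator f := by
    funext y
    by_cases h : y ∈ Icc (-a) a
    · rw [Set.indicator_of_mem h]
    · rw [Set.indicator_of_notMem h, hvanish y h]
  rw [this]
  refine IntegrableOn.integrable_indicator ?_ measurableSet_Icc
  exact Measure.integrableOn_of_bounded measure_Icc_lt_top.ne
    hf.aestronglyMeasurable (ae_of_all _ hbd)

include hc hca in
lemma integrable_gd_left (x : ℝ) : Integrable (fun y => gd a c x y) volume := by
  refine integrable_gd_slice hc hca (measurable_gd.comp (measurable_const.prodMk measurable_id)) ?_ ?_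
  · intro y hy; unfold gd; rw [if_neg]; rintro ⟨_, h⟩; exact hy h
  · intro y
    rw [abs_of_nonneg (gd_nonneg hc hca x y)]
    exact gd_le hc hca x y

include hc hca in
lemma integrable_gd_sheared (s : ℝ) : Integrable (fun t => gd a c t (s - t)) volume := by
  refine integrable_gd_slice hc hca
    (measurable_gd.comp (measurable_id.prodMk (measurable_const.sub measurable_id))) ?_ ?_
  · intro t ht; unfold gd; rw [if_neg]; rintro ⟨h, _⟩; exact ht h
  · intro t
    rw [abs_of_nonneg (gd_nonneg hc hca t (s - t))]
    exact gd_le hc hca t (s - t)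

include ha hc hca in
theorem map_fst_eq :
    (volume.withDensity (fun p : ℝ × ℝ => ENNReal.ofReal (gd a c p.1 p.2))).map Prod.fst
      = unif a := by
  ext E hE
  rw [Measure.map_apply measurable_fst hE,
    withDensity_apply _ (hE.preimage measurable_fst)]
  have hpre : (Prod.fst : ℝ × ℝ → ℝ) ⁻¹' E = E ×ˢ (univ : Set ℝ) := by
    ext p; simp
  rw [hpre, Measure.volume_eq_prod, ← Measure.prod_restrict E univ, Measure.restrict_univ]
  rw [lintegral_prod _ ((measurable_gd.ennreal_ofReal).aemeasurable)]
  have inner : ∀ x : ℝ, (∫⁻ y, ENNReal.ofReal (gd a c x y)) =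
      Set.indicator (Icc (-a) a) (fun _ => ENNReal.ofReal ((2*a)⁻¹)) x := by
    intro x
    rw [← ofReal_integral_eq_lintegral_ofReal (integrable_gd_left hc hca x)
      (ae_of_all _ (gd_nonneg hc hca x))]
    rw [margin_fst ha hc hca x]
    by_cases h : x ∈ Icc (-a) a
    · rw [Set.indicator_of_mem h, Set.indicator_of_mem h]
    · rw [Set.indicator_of_notMem h, Set.indicator_of_notMem h, ENNReal.ofReal_zero]
  simp_rw [inner]
  rw [lintegral_indicator measurableSet_Icc, setLIntegral_const,
    Measure.restrict_apply measurableSet_Icc]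
  unfold unif
  rw [Measure.smul_apply, Measure.restrict_apply hE, smul_eq_mul]
  rw [ENNReal.ofReal_inv_of_pos (by linarith : (0:ℝ) < 2*a)]
  rw [Set.inter_comm, mul_comm]

lemma gd_symm (x y : ℝ) : gd a c y x = gd a c x y := by
  unfold gd
  by_cases h : x ∈ Icc (-a) a ∧ y ∈ Icc (-a) a
  · rw [if_pos ⟨h.2, h.1⟩, if_pos h]
    rw [add_comm y x]
    ring
  · rw [if_neg (fun hh => h ⟨hh.2, hh.1⟩), if_neg h]

include ha hc hca in
theorem map_snd_eq :
    (volume.withDensity (fun p : ℝ × ℝ => ENNReal.ofReal (gd a c p.1 p.2))).map Prod.snd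
      = unif a := by
  set ν := volume.withDensity (fun p : ℝ × ℝ => ENNReal.ofReal (gd a c p.1 p.2)) with hν
  have hswap : ν.map Prod.swap = ν := by
    ext E hE
    rw [Measure.map_apply measurable_swap hE, hν,
      withDensity_apply _ (hE.preimage measurable_swap),
      withDensity_apply _ hE]
    have MP : MeasurePreserving (Prod.swap : ℝ × ℝ → ℝ × ℝ) volume volume := by
      rw [Measure.volume_eq_prod]
      exact Measure.measurePreserving_swap
    have := MP.setLIntegral_comp_preimage hE
      ((measurable_gd (a := a) (c := c)).ennreal_ofReal)
    rw [← this]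
    refine setLIntegral_congr_fun (hE.preimage measurable_swap) ?_
    intro p _
    simp only [Prod.fst_swap, Prod.snd_swap]
    rw [gd_symm]
  have hcomp : (Prod.snd : ℝ × ℝ → ℝ) = Prod.fst ∘ Prod.swap := rfl
  rw [hcomp, ← Measure.map_map measurable_fst measurable_swap, hswap]
  exact map_fst_eq ha hc hca

include ha hc hca in
theorem map_sum_eq :
    (volume.withDensity (fun p : ℝ × ℝ => ENNReal.ofReal (gd a c p.1 p.2))).map
      (fun p : ℝ × ℝ => p.1 + p.2) = unif c := by
  have hmeas_sum : Measurable (fun p : ℝ × ℝ => p.1 + p.2) :=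
    measurable_fst.add measurable_snd
  ext E hE
  rw [Measure.map_apply hmeas_sum hE, withDensity_apply _ (hE.preimage hmeas_sum)]
  have MP : MeasurePreserving (fun q : ℝ × ℝ => (q.2, q.1 - q.2)) volume volume := by
    rw [Measure.volume_eq_prod]
    exact measurePreserving_prod_sub_swap volume volume
  have key := MP.setLIntegral_comp_preimage (hE.preimage hmeas_sum)
    ((measurable_gd (a := a) (c := c)).ennreal_ofReal)
  rw [← key]

  have hpre : (fun q : ℝ × ℝ => (q.2, q.1 - q.2)) ⁻¹'
      ((fun p : ℝ × ℝ => p.1 + p.2) ⁻¹' E) = E ×ˢ (univ : Set ℝ) := by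
    ext q
    have : q.2 + (q.1 - q.2) = q.1 := by ring
    simp [this]
  rw [hpre, Measure.volume_eq_prod, ← Measure.prod_restrict E univ, Measure.restrict_univ]
  rw [lintegral_prod (fun z : ℝ × ℝ => ENNReal.ofReal (gd a c z.2 (z.1 - z.2)))
    (((measurable_gd (a := a) (c := c)).comp
      (measurable_snd.prodMk (measurable_fst.sub measurable_snd))).ennreal_ofReal.aemeasurable)]
  have h0 : ∀ᵐ s : ℝ, s ≠ (0:ℝ) := by
    rw [ae_iff]
    have : {s : ℝ | ¬ s ≠ 0} = {(0:ℝ)} := by ext s; simp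
    rw [this]
    exact Real.volume_singleton
  have inner : ∀ᵐ s : ℝ, (∫⁻ t, ENNReal.ofReal (gd a c t (s - t))) =
      Set.indicator (Icc (-c) c) (fun _ => ENNReal.ofReal ((2*c)⁻¹)) s := by
    filter_upwards [h0] with s hs
    rw [← ofReal_integral_eq_lintegral_ofReal (integrable_gd_sheared hc hca s)
      (ae_of_all _ (fun t => gd_nonneg hc hca t (s - t)))]
    rw [margin_sum ha hc hca s hs]
    by_cases h : s ∈ Icc (-c) c
    · rw [Set.indicator_of_mem h, Set.indicator_of_mem h]
    · rw [Set.indicator_of_notMem h, Set.indicator_of_notMem h, ENNReal.ofReal_zero]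
  rw [lintegral_congr_ae (ae_restrict_of_ae inner)]
  rw [lintegral_indicator measurableSet_Icc, setLIntegral_const,
    Measure.restrict_apply measurableSet_Icc]
  unfold unif
  rw [Measure.smul_apply, Measure.restrict_apply hE, smul_eq_mul]
  rw [ENNReal.ofReal_inv_of_pos (by linarith : (0:ℝ) < 2*c)]
  rw [Set.inter_comm, mul_comm]
end T

/-- For any `0 ≤ c ≤ 2a` there exist two random variables, each uniform on `[-a,a]`,
whose sum is uniform on `[-c, c]` (for `c = 0`, the sum is identically `0`:
complete mixability of two uniforms). -/
theorem stmt18 (a : ℝ) (ha : 0 < a) (c : ℝ) (hc0 : 0 ≤ c) (hc : c ≤ 2 * a) :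
    ∃ ν : Measure (ℝ × ℝ), IsProbabilityMeasure ν ∧
      ν.map Prod.fst = unif a ∧ ν.map Prod.snd = unif a ∧
      ν.map (fun p => p.1 + p.2)
        = (if c = 0 then Measure.dirac (0 : ℝ) else unif c) := by
  haveI := isProb_unif ha
  rcases eq_or_lt_of_le hc0 with hczero | hcpos
  · -- c = 0 : countermonotonic coupling
    have hms : Measurable (fun x : ℝ => (x, -x)) := measurable_id.prodMk measurable_neg
    refine ⟨(unif a).map (fun x => (x, -x)), ?_, ?_, ?_, ?_⟩
    · exact Measure.isProbabilityMeasure_map hms.aemeasurable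
    · rw [Measure.map_map measurable_fst hms]
      rw [show (Prod.fst ∘ (fun x : ℝ => (x, -x))) = id from rfl, Measure.map_id]
    · rw [Measure.map_map measurable_snd hms]
      exact map_neg_unif
    · rw [Measure.map_map (by fun_prop : Measurable (fun p : ℝ × ℝ => p.1 + p.2)) hms]
      rw [show ((fun p : ℝ × ℝ => p.1 + p.2) ∘ (fun x : ℝ => (x, -x)))
          = (fun _ : ℝ => (0:ℝ)) from funext fun x => by simp]
      rw [Measure.map_const, unif_univ ha, if_pos hczero.symm, one_smul]
  · rcases eq_or_lt_of_le hc with hc2a | hlt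
    · -- c = 2a : comonotonic coupling
      have hms : Measurable (fun x : ℝ => (x, x)) := measurable_id.prodMk measurable_id
      refine ⟨(unif a).map (fun x => (x, x)), ?_, ?_, ?_, ?_⟩
      · exact Measure.isProbabilityMeasure_map hms.aemeasurable
      · rw [Measure.map_map measurable_fst hms]
        rw [show (Prod.fst ∘ (fun x : ℝ => (x, x))) = id from rfl, Measure.map_id]
      · rw [Measure.map_map measurable_snd hms]
        rw [show (Prod.snd ∘ (fun x : ℝ => (x, x))) = id from rfl, Measure.map_id]
      · rw [Measure.map_map (by fun_prop : Measurable (fun p : ℝ × ℝ => p.1 + p.2)) hms]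
        rw [show ((fun p : ℝ × ℝ => p.1 + p.2) ∘ (fun x : ℝ => (x, x)))
            = (fun x : ℝ => x + x) from rfl]
        rw [map_two_unif ha, if_neg (ne_of_gt hcpos), hc2a]
    · -- 0 < c < 2a : absolutely continuous coupling
      refine ⟨volume.withDensity (fun p : ℝ × ℝ => ENNReal.ofReal (gd a c p.1 p.2)),
        ?_, map_fst_eq ha hcpos hlt, map_snd_eq ha hcpos hlt, ?_⟩
      · constructor
        have hfst := map_fst_eq ha hcpos hlt
        have huniv : (volume.withDensity (fun p : ℝ × ℝ => ENNReal.ofReal (gd a c p.1 p.2)))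
            Set.univ = ((volume.withDensity
              (fun p : ℝ × ℝ => ENNReal.ofReal (gd a c p.1 p.2))).map Prod.fst) Set.univ := by
          rw [Measure.map_apply measurable_fst MeasurableSet.univ, Set.preimage_univ]
        rw [huniv, hfst, unif_univ ha]
      · rw [if_neg (ne_of_gt hcpos)]
        exact map_sum_eq ha hcpos hlt
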